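/- Let P(z) = a_n z^n + Σ_{ν=μ}^{n} a_{n−ν} z^{n−ν}, 1 ≤ μ ≤ n, be a polynomial of degree n having all its zeros in |z| < k, where k ≤ 1, set m = min_{|z|=k} |P(z)|, and let Q(z) = z^n · conj(P(1/conj(z))). Then for all z with |z| = 1, k^μ |P′(z)| − mn/k^{n−μ} ≥ |Q′(z)|. -/

import Mathlib

open Polynomial Metric

noncomputable def Complex.abs : AbsoluteValue ℂ ℝ := IsAbsoluteValue.toAbsoluteValue (norm : ℂ → ℝ)

@[simp] lemma Complex.norm_eq_abs (z : ℂ) : ‖z‖ = Complex.abs z := rfl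

lemma Complex.abs_apply (z : ℂ) : Complex.abs z = Real.sqrt (Complex.normSq z) := Complex.norm_def z

lemma Complex.sq_abs (z : ℂ) : Complex.abs z ^ 2 = Complex.normSq z := Complex.sq_norm z

@[simp] lemma Complex.abs_ofReal (r : ℝ) : Complex.abs (r : ℂ) = |r| := Complex.norm_real r

@[simp] lemma Complex.abs_natCast (n : ℕ) : Complex.abs (n : ℂ) = n := Complex.norm_natCast n

@[simp] lemma Complex.abs_conj (z : ℂ) : Complex.abs ((starRingEnd ℂ) z) = Complex.abs z :=
  Complex.norm_conj z

lemma Complex.continuous_abs : Continuous Complex.abs := continuous_norm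

lemma aux_eval_reflect (f : Polynomial ℂ) (N : ℕ) (hf : f.natDegree ≤ N) (w : ℂ) (hw : w ≠ 0) :
    (Polynomial.reflect N f).eval w = w ^ N * f.eval w⁻¹ := by
  haveI : Invertible (w⁻¹) := invertibleOfNonzero (inv_ne_zero hw)
  have h := Polynomial.eval₂_reflect_mul_pow (RingHom.id ℂ) (w⁻¹) N f hf
  rw [invOf_eq_inv, inv_inv] at h
  have h1 : (Polynomial.reflect N f).eval w * (w⁻¹) ^ N = f.eval w⁻¹ := h
  field_simp at h1
  rw [one_div] at h1; rw [← h1, inv_pow]; field_simp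

lemma aux_sum_pos {M : Multiset ℝ} (h : ∀ x ∈ M, 0 < x) (h0 : M ≠ 0) : 0 < M.sum := by
  induction M using Multiset.induction with
  | empty => simp at h0
  | cons a s ih =>
    rw [Multiset.sum_cons]
    have ha : 0 < a := h a (Multiset.mem_cons_self a s)
    have hs : 0 ≤ s.sum := Multiset.sum_nonneg fun x hx => (h x (Multiset.mem_cons_of_mem hx)).le
    linarith

lemma aux_half {z r : ℂ} (hr : Complex.abs r ≤ Complex.abs z) (hzr : z ≠ r) :
    1/2 ≤ (z * (z - r)⁻¹).re := by
  have hd : z - r ≠ 0 := sub_ne_zero.2 hzr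
  have h1 : 0 < Complex.normSq (z - r) := Complex.normSq_pos.2 hd
  have hr2 : Complex.normSq r ≤ Complex.normSq z := by
    have := Complex.sq_abs r; have := Complex.sq_abs z
    nlinarith [Complex.abs.nonneg r, Complex.abs.nonneg z]
  rw [← div_eq_mul_inv, Complex.div_re, ← add_div, le_div_iff₀ h1]
  simp only [Complex.normSq_apply, Complex.sub_re, Complex.sub_im, Complex.normSq_apply] at *
  nlinarith

lemma aux_pos {z r : ℂ} (hr : Complex.abs r < Complex.abs z) :
    0 < (z * (z - r)⁻¹).re := by
  have hzr : z ≠ r := fun h => by rw [h] at hr; exact lt_irrefl _ hr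
  have hd : z - r ≠ 0 := sub_ne_zero.2 hzr
  have h1 : 0 < Complex.normSq (z - r) := Complex.normSq_pos.2 hd
  have hr2 : Complex.normSq r < Complex.normSq z := by
    have := Complex.sq_abs r; have := Complex.sq_abs z
    nlinarith [Complex.abs.nonneg r, Complex.abs.nonneg z]
  have hz0 : 0 < Complex.normSq z := lt_of_le_of_lt (Complex.normSq_nonneg r) hr2
  rw [← div_eq_mul_inv, Complex.div_re, ← add_div, lt_div_iff₀ h1]
  simp only [Complex.normSq_apply, Complex.sub_re, Complex.sub_im] at *
  nlinarith [sq_nonneg (z.re * r.im - z.im * r.re), sq_nonneg (z.re - r.re), sq_nonneg (z.im - r.im)]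

lemma aux_abs_sub {S : ℂ} {n : ℕ} (h : (n : ℝ)/2 ≤ S.re) :
    Complex.abs ((n : ℂ) - S) ≤ Complex.abs S := by
  rw [Complex.abs_apply, Complex.abs_apply]
  apply Real.sqrt_le_sqrt
  simp only [Complex.normSq_apply, Complex.sub_re, Complex.sub_im, Complex.natCast_re,
    Complex.natCast_im]
  nlinarith

lemma aux_eval_derivative_prod (M : Multiset ℂ) (z : ℂ) (h : ∀ r ∈ M, z ≠ r) :
    (Polynomial.derivative (M.map fun r => X - C r).prod).eval z
      = ((M.map fun r => X - C r).prod).eval z * (M.map fun r => (z - r)⁻¹).sum := by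
  induction M using Multiset.induction with
  | empty => simp
  | cons a s ih =>
    have ha : z - a ≠ 0 := sub_ne_zero.2 (h a (Multiset.mem_cons_self a s))
    have ihs := ih (fun r hr => h r (Multiset.mem_cons_of_mem hr))
    simp only [Multiset.map_cons, Multiset.prod_cons, Multiset.sum_cons, derivative_mul,
      derivative_sub, derivative_X, derivative_C, sub_zero, one_mul, eval_add, eval_mul,
      eval_sub, eval_X, eval_C, ihs]
    field_simp


lemma aux_card_roots (R : Polynomial ℂ) (hR : R ≠ 0) :
    Multiset.card R.roots = R.natDegree :=
  (Polynomial.splits_iff_card_roots.mp (IsAlgClosed.splits R))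

lemma aux_factor (R : Polynomial ℂ) (hR : R ≠ 0) :
    C R.leadingCoeff * (R.roots.map fun a => X - C a).prod = R :=
  Polynomial.C_leadingCoeff_mul_prod_multiset_X_sub_C (aux_card_roots R hR)

lemma aux_root_ne {R : Polynomial ℂ} (hR : R ≠ 0) {z : ℂ} (hz : R.eval z ≠ 0) :
    ∀ r ∈ R.roots, z ≠ r := by
  intro r hr
  have : R.eval r = 0 := (Polynomial.mem_roots hR).mp hr
  intro h; rw [h] at hz; exact hz this

lemma aux_deriv_eval' (a : ℂ) (M : Multiset ℂ) (z : ℂ) (h : ∀ r ∈ M, z ≠ r) :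
    (Polynomial.derivative (C a * (M.map fun r => X - C r).prod)).eval z
      = (C a * (M.map fun r => X - C r).prod).eval z * (M.map fun r => (z - r)⁻¹).sum := by
  rw [derivative_mul, derivative_C, zero_mul, zero_add, eval_mul, eval_C,
    aux_eval_derivative_prod _ _ h, eval_mul, eval_C]
  ring

lemma aux_deriv_eval (R : Polynomial ℂ) (hR : R ≠ 0) (z : ℂ) (hz : R.eval z ≠ 0) :
    (Polynomial.derivative R).eval z
      = R.eval z * (R.roots.map fun r => (z - r)⁻¹).sum := by
  have hfac := aux_factor R hR
  have hne := aux_root_ne hR hz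
  have h := aux_deriv_eval' R.leadingCoeff R.roots z hne
  rw [hfac] at h
  exact h

lemma aux_GL {R : Polynomial ℂ} {n : ℕ} (hn : 1 ≤ n) (hdeg : R.natDegree = n) {k : ℝ}
    (hroots : ∀ x, R.eval x = 0 → Complex.abs x < k) {z : ℂ} (hz : k ≤ Complex.abs z) :
    R.eval z ≠ 0 ∧ (Polynomial.derivative R).eval z ≠ 0 := by
  have hR : R ≠ 0 := fun h => by simp [h] at hdeg; omega
  have hez : R.eval z ≠ 0 := by
    intro h; exact absurd (hroots z h) (not_lt.2 hz)
  refine ⟨hez, ?_⟩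
  rw [aux_deriv_eval R hR z hez]
  refine mul_ne_zero hez ?_
  set u := (R.roots.map fun r => (z - r)⁻¹).sum with hu
  intro h0
  have hre : 0 < (z * u).re := by
    have : z * u = (R.roots.map fun r => z * (z - r)⁻¹).sum := by
      rw [hu, Multiset.sum_map_mul_left]
    rw [this, ← Complex.coe_reAddGroupHom, map_multiset_sum, Multiset.map_map]
    apply aux_sum_pos
    · intro x hx
      simp only [Multiset.mem_map, Function.comp_apply] at hx
      obtain ⟨r, hr, rfl⟩ := hx
      have : Complex.abs r < k := hroots r ((Polynomial.mem_roots hR).mp hr)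
      exact aux_pos (lt_of_lt_of_le this hz)
    · rw [Ne, Multiset.map_eq_zero]
      intro h
      have hc := aux_card_roots R hR
      rw [h, hdeg] at hc
      simp at hc
      omega
  rw [h0, mul_zero] at hre; simp at hre

lemma aux_base {R : Polynomial ℂ} {n : ℕ} (hdeg : R.natDegree = n) (hR : R ≠ 0) {z : ℂ}
    (hroots : ∀ x, R.eval x = 0 → Complex.abs x ≤ Complex.abs z)
    (hz : R.eval z ≠ 0) :
    Complex.abs ((C (n : ℂ) * R - X * Polynomial.derivative R).eval z)
      ≤ Complex.abs z * Complex.abs ((Polynomial.derivative R).eval z) := by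
  set u := (R.roots.map fun r => (z - r)⁻¹).sum with hu
  set S := z * u with hS
  have hcard : Multiset.card R.roots = n := by rw [aux_card_roots R hR, hdeg]
  have hre : (n : ℝ)/2 ≤ S.re := by
    have h1 : S = (R.roots.map fun r => z * (z - r)⁻¹).sum := by
      rw [hS, hu, Multiset.sum_map_mul_left]
    rw [h1, ← Complex.coe_reAddGroupHom, map_multiset_sum, Multiset.map_map]
    have h2 := Multiset.card_nsmul_le_sum
      (s := R.roots.map (Complex.reAddGroupHom ∘ fun r => z * (z - r)⁻¹)) (a := (1:ℝ)/2) ?_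
    · rw [Multiset.card_map, hcard] at h2
      rw [nsmul_eq_mul] at h2
      linarith [h2]
    · intro x hx
      simp only [Multiset.mem_map, Function.comp_apply] at hx
      obtain ⟨r, hr, rfl⟩ := hx
      have hrk : Complex.abs r ≤ Complex.abs z := hroots r ((Polynomial.mem_roots hR).mp hr)
      have hzr : z ≠ r := aux_root_ne hR hz r hr
      exact aux_half hrk hzr
  have heval : (C (n : ℂ) * R - X * Polynomial.derivative R).eval z
      = R.eval z * ((n : ℂ) - S) := by
    rw [eval_sub, eval_mul, eval_mul, eval_C, eval_X, aux_deriv_eval R hR z hz, hS, hu]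
    ring
  rw [heval, map_mul]
  calc Complex.abs (R.eval z) * Complex.abs ((n : ℂ) - S)
      ≤ Complex.abs (R.eval z) * Complex.abs S := by
        exact mul_le_mul_of_nonneg_left (aux_abs_sub hre) (Complex.abs.nonneg _)
    _ = Complex.abs z * Complex.abs ((Polynomial.derivative R).eval z) := by
        rw [aux_deriv_eval R hR z hz, hS]
        rw [← map_mul, ← map_mul]
        rw [hu]; ring_nf
lemma aux_Dcoeff (P : Polynomial ℂ) (n : ℕ) (i : ℕ) :
    (C (n : ℂ) * P - X * Polynomial.derivative P).coeff i
      = ((n : ℂ) - (i : ℂ)) * P.coeff i := by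
  cases i with
  | zero => simp [coeff_C_mul, Polynomial.coeff_mul]
  | succ j => simp [coeff_C_mul, Polynomial.coeff_X_mul, Polynomial.coeff_derivative]; ring

lemma aux_L {n μ : ℕ} (hμ1 : 1 ≤ μ) (hμn : μ ≤ n) {k : ℝ} (hk0 : 0 < k) (hk1 : k ≤ 1)
    (R : Polynomial ℂ) (hdeg : R.natDegree = n) (hn : 1 ≤ n)
    (hroots : ∀ x, R.eval x = 0 → Complex.abs x < k)
    (hD : ∀ i, n - μ < i → (C (n : ℂ) * R - X * Polynomial.derivative R).coeff i = 0)
    (z₀ : ℂ) (hz₀ : Complex.abs z₀ = 1) :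
    Complex.abs ((C (n : ℂ) * R - X * Polynomial.derivative R).eval z₀)
      ≤ k ^ μ * Complex.abs ((Polynomial.derivative R).eval z₀) := by
  have hk0' : (k : ℝ)⁻¹ ≠ 0 := ne_of_gt (inv_pos.mpr hk0)
  have hR0 : R ≠ 0 := by intro h; rw [h] at hdeg; simp at hdeg; omega
  set Dp := C (n : ℂ) * R - X * Polynomial.derivative R with hDp
  have hDdeg : Dp.natDegree ≤ n - μ := natDegree_le_iff_coeff_eq_zero.mpr hD
  have hR'deg : (Polynomial.derivative R).natDegree ≤ n - 1 := by
    have := Polynomial.natDegree_derivative_le R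
    omega
  set A := Polynomial.reflect (n - μ) Dp with hA
  set Bq := Polynomial.reflect (n - 1) (Polynomial.derivative R) with hB
  have hlead : R.coeff n ≠ 0 := by
    rw [← hdeg]
    exact Polynomial.leadingCoeff_ne_zero.mpr hR0
  have hBq0 : Bq.eval 0 ≠ 0 := by
    rw [hB, ← Polynomial.coeff_zero_eq_eval_zero, Polynomial.coeff_reflect, Polynomial.revAt_zero,
      Polynomial.coeff_derivative, Nat.sub_add_cancel hn]
    apply mul_ne_zero hlead
    have : (n : ℂ) ≠ 0 := Nat.cast_ne_zero.mpr (by omega)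
    have h2 : ((n - 1 : ℕ) : ℂ) + 1 = ((n : ℕ) : ℂ) := by
      exact_mod_cast congrArg (Nat.cast : ℕ → ℂ) (Nat.sub_add_cancel hn)
    rw [h2]; exact this
  have hBne : ∀ w ∈ closedBall (0 : ℂ) k⁻¹, Bq.eval w ≠ 0 := by
    intro w hw
    rcases eq_or_ne w 0 with rfl | hw0
    · exact hBq0
    · rw [hB, aux_eval_reflect _ _ hR'deg w hw0]
      apply mul_ne_zero (pow_ne_zero _ hw0)
      have hwle : Complex.abs w ≤ k⁻¹ := by
        simpa [Complex.dist_eq] using (mem_closedBall.mp hw)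
      have hwpos : 0 < Complex.abs w := by
        simpa [Complex.abs.pos_iff] using hw0
      have hkw : k ≤ Complex.abs w⁻¹ := by
        rw [map_inv₀, inv_eq_one_div, le_div_iff₀ hwpos]
        calc k * Complex.abs w ≤ k * k⁻¹ := by
              exact mul_le_mul_of_nonneg_left hwle (le_of_lt hk0)
          _ = 1 := mul_inv_cancel₀ (ne_of_gt hk0)
      exact (aux_GL hn hdeg hroots hkw).2
  have hdiff : DiffContOnCl ℂ (fun w => A.eval w / Bq.eval w) (ball 0 k⁻¹) := by
    apply DifferentiableOn.diffContOnCl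
    rw [closure_ball (0 : ℂ) hk0']
    exact (A.differentiable.differentiableOn).div (Bq.differentiable.differentiableOn) hBne
  have hfront : ∀ w ∈ frontier (ball (0 : ℂ) k⁻¹), ‖A.eval w / Bq.eval w‖ ≤ k ^ μ := by
    intro w hw
    rw [frontier_ball _ hk0'] at hw
    have haw : Complex.abs w = k⁻¹ := by
      simpa [Complex.dist_eq] using hw
    have hw0 : w ≠ 0 := by
      intro h; rw [h] at haw; simp at haw; linarith
    have hazk : Complex.abs w⁻¹ = k := by rw [map_inv₀, haw, inv_inv]
    have hkz : k ≤ Complex.abs w⁻¹ := le_of_eq hazk.symm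
    obtain ⟨hez, heD⟩ := aux_GL hn hdeg hroots hkz
    have hroots' : ∀ x, R.eval x = 0 → Complex.abs x ≤ Complex.abs w⁻¹ := by
      intro x hx
      rw [hazk]
      exact (hroots x hx).le
    have hbase := aux_base hdeg hR0 hroots' hez
    rw [hazk] at hbase
    have hR'pos : 0 < Complex.abs ((Polynomial.derivative R).eval w⁻¹) :=
      Complex.abs.pos heD
    rw [norm_div, hA, hB, aux_eval_reflect _ _ hDdeg w hw0, aux_eval_reflect _ _ hR'deg w hw0]
    simp only [Complex.norm_eq_abs, map_mul, map_pow, haw]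
    rw [div_le_iff₀ (by positivity)]
    have hsplit : n - 1 = (n - μ) + (μ - 1) := by omega
    have hμsplit : μ = (μ - 1) + 1 := by omega
    calc (k⁻¹) ^ (n - μ) * Complex.abs (Dp.eval w⁻¹)
        ≤ (k⁻¹) ^ (n - μ) * (k * Complex.abs ((Polynomial.derivative R).eval w⁻¹)) := by
          apply mul_le_mul_of_nonneg_left hbase (by positivity)
      _ = k ^ μ * ((k⁻¹) ^ (n - 1) * Complex.abs ((Polynomial.derivative R).eval w⁻¹)) := by
          rw [hsplit, pow_add]
          conv_rhs => rw [hμsplit]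
          rw [pow_add, pow_one]
          field_simp
          rw [show n - (μ - 1 + 1) = n - μ by omega, show μ - 1 + 1 - 1 = μ - 1 by omega,
            mul_assoc (Complex.abs _) (k ^ (μ - 1)), mul_comm (k ^ (μ - 1)),
            mul_assoc (Complex.abs _), mul_assoc ((1 / k) ^ (n - μ)), ← mul_pow,
            mul_one_div_cancel hk0.ne', one_pow, mul_one]
          exact mul_comm _ _
  have hz00 : z₀ ≠ 0 := by
    intro h; rw [h] at hz₀; simp at hz₀
  set w₀ := z₀⁻¹ with hw₀
  have hw₀0 : w₀ ≠ 0 := inv_ne_zero hz00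
  have haw₀ : Complex.abs w₀ = 1 := by rw [hw₀, map_inv₀, hz₀, inv_one]
  have h1k : (1 : ℝ) ≤ k⁻¹ := by
    rw [inv_eq_one_div, le_div_iff₀ hk0]; linarith
  have hmemc : w₀ ∈ closedBall (0 : ℂ) k⁻¹ := by
    rw [mem_closedBall]
    simpa [Complex.dist_eq, haw₀] using h1k
  have hmem : w₀ ∈ closure (ball (0 : ℂ) k⁻¹) := by
    rw [closure_ball (0 : ℂ) hk0']
    exact hmemc
  have hnorm := Complex.norm_le_of_forall_mem_frontier_norm_le isBounded_ball hdiff hfront hmem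
  have hBw₀ : Bq.eval w₀ ≠ 0 := hBne w₀ hmemc
  rw [norm_div, div_le_iff₀ (by simpa [Complex.norm_eq_abs, Complex.abs.pos_iff] using hBw₀)]
    at hnorm
  rw [hA, hB, aux_eval_reflect _ _ hDdeg w₀ hw₀0, aux_eval_reflect _ _ hR'deg w₀ hw₀0] at hnorm
  rw [hw₀, inv_inv] at hnorm
  simpa [Complex.norm_eq_abs, map_mul, map_pow, haw₀, hw₀, map_inv₀, hz₀] using hnorm

lemma aux_growth {P : Polynomial ℂ} {n : ℕ} (hn : 1 ≤ n) (hdeg : P.natDegree = n) {k m : ℝ}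
    (hk0 : 0 < k) (hm0 : 0 ≤ m)
    (hroots : ∀ x, P.eval x = 0 → Complex.abs x < k)
    (hmle : ∀ x : ℂ, Complex.abs x = k → m ≤ Complex.abs (P.eval x)) :
    (∀ z : ℂ, k ≤ Complex.abs z → m * (Complex.abs z) ^ n ≤ k ^ n * Complex.abs (P.eval z))
      ∧ m ≤ k ^ n * Complex.abs (P.coeff n) := by
  have hk0' : (k : ℝ)⁻¹ ≠ 0 := ne_of_gt (inv_pos.mpr hk0)
  have hP0 : P ≠ 0 := by intro h; rw [h] at hdeg; simp at hdeg; omega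
  have hlead : P.coeff n ≠ 0 := by
    rw [← hdeg]; exact Polynomial.leadingCoeff_ne_zero.mpr hP0
  set T := Polynomial.reflect n P with hT
  have hPdeg : P.natDegree ≤ n := le_of_eq hdeg
  have hT0 : T.eval 0 = P.coeff n := by
    rw [hT, ← Polynomial.coeff_zero_eq_eval_zero, Polynomial.coeff_reflect, Polynomial.revAt_zero]
  have hTne : ∀ w ∈ closedBall (0 : ℂ) k⁻¹, T.eval w ≠ 0 := by
    intro w hw
    rcases eq_or_ne w 0 with rfl | hw0
    · rw [hT0]; exact hlead
    · rw [hT, aux_eval_reflect _ _ hPdeg w hw0]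
      apply mul_ne_zero (pow_ne_zero _ hw0)
      have hwle : Complex.abs w ≤ k⁻¹ := by
        simpa [Complex.dist_eq] using (mem_closedBall.mp hw)
      have hwpos : 0 < Complex.abs w := by
        simpa [Complex.abs.pos_iff] using hw0
      have hkw : k ≤ Complex.abs w⁻¹ := by
        rw [map_inv₀, inv_eq_one_div, le_div_iff₀ hwpos]
        calc k * Complex.abs w ≤ k * k⁻¹ :=
              mul_le_mul_of_nonneg_left hwle (le_of_lt hk0)
          _ = 1 := mul_inv_cancel₀ (ne_of_gt hk0)
      intro h
      exact absurd (hroots _ h) (not_lt.2 hkw)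
  have hmain : ∀ w ∈ closedBall (0 : ℂ) k⁻¹, m ≤ k ^ n * Complex.abs (T.eval w) := by
    intro w hw
    rcases eq_or_lt_of_le hm0 with hm | hm
    · calc m = 0 := hm.symm
        _ ≤ _ := by positivity
    have hdiff : DiffContOnCl ℂ (fun w => (m : ℂ) / T.eval w) (ball 0 k⁻¹) := by
      apply DifferentiableOn.diffContOnCl
      rw [closure_ball (0 : ℂ) hk0']
      exact (differentiableOn_const _).div (T.differentiable.differentiableOn) hTne
    have hfront : ∀ w ∈ frontier (ball (0 : ℂ) k⁻¹), ‖(m : ℂ) / T.eval w‖ ≤ k ^ n := by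
      intro w hwf
      rw [frontier_ball _ hk0'] at hwf
      have haw : Complex.abs w = k⁻¹ := by simpa [Complex.dist_eq] using hwf
      have hw0 : w ≠ 0 := by intro h; rw [h] at haw; simp at haw; linarith
      have hazk : Complex.abs w⁻¹ = k := by rw [map_inv₀, haw, inv_inv]
      have hmP : m ≤ Complex.abs (P.eval w⁻¹) := hmle _ hazk
      rw [norm_div, hT, aux_eval_reflect _ _ hPdeg w hw0]
      simp only [Complex.norm_eq_abs, map_mul, map_pow, haw, Complex.abs_natCast]
      rw [div_le_iff₀]
      · have hkk : (k : ℝ) ^ n * (k⁻¹) ^ n = 1 := by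
          rw [← mul_pow, mul_inv_cancel₀ (ne_of_gt hk0), one_pow]
        have : Complex.abs (m : ℂ) = m := by
          rw [Complex.abs_ofReal, abs_of_nonneg hm0]
        rw [this]
        calc m ≤ Complex.abs (P.eval w⁻¹) := hmP
          _ = k ^ n * ((k⁻¹) ^ n * Complex.abs (P.eval w⁻¹)) := by
              rw [← mul_assoc, hkk, one_mul]
      · have : P.eval w⁻¹ ≠ 0 := by
          intro h
          have := hroots _ h
          rw [hazk] at this
          exact lt_irrefl _ this
        have := Complex.abs.pos this
        positivity
    have hmem : w ∈ closure (ball (0 : ℂ) k⁻¹) := by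
      rw [closure_ball (0 : ℂ) hk0']; exact hw
    have hnorm := Complex.norm_le_of_forall_mem_frontier_norm_le isBounded_ball hdiff hfront hmem
    have hTw : T.eval w ≠ 0 := hTne w hw
    rw [norm_div, div_le_iff₀ (by simpa [Complex.norm_eq_abs, Complex.abs.pos_iff] using hTw)]
      at hnorm
    have : Complex.abs (m : ℂ) = m := by rw [Complex.abs_ofReal, abs_of_nonneg hm0]
    simpa [Complex.norm_eq_abs, Real.norm_eq_abs, abs_of_nonneg hm0] using hnorm
  constructor
  · intro z hz
    have hz0 : z ≠ 0 := by
      intro h; rw [h] at hz; simp at hz; linarith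
    have hzpos : 0 < Complex.abs z := Complex.abs.pos hz0
    have hwmem : z⁻¹ ∈ closedBall (0 : ℂ) k⁻¹ := by
      rw [mem_closedBall]
      simp only [Complex.dist_eq, sub_zero, Complex.norm_eq_abs, map_inv₀]
      rw [inv_le_inv₀ hzpos hk0]
      exact hz
    have h1 := hmain z⁻¹ hwmem
    rw [hT, aux_eval_reflect _ _ hPdeg z⁻¹ (inv_ne_zero hz0), inv_inv] at h1
    rw [map_mul, map_pow, map_inv₀] at h1
    have h2 := mul_le_mul_of_nonneg_right h1 (le_of_lt (pow_pos hzpos n))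
    calc m * Complex.abs z ^ n ≤ k ^ n * ((Complex.abs z)⁻¹ ^ n * Complex.abs (P.eval z))
          * Complex.abs z ^ n := h2
      _ = k ^ n * Complex.abs (P.eval z) := by
          field_simp
          rw [one_div, inv_pow, mul_comm _ (Complex.abs (P.eval z)), mul_assoc,
            inv_mul_cancel₀ (pow_ne_zero _ hzpos.ne'), mul_one]
  · have h0 := hmain 0 (by simp [mem_closedBall]; positivity)
    rw [hT0] at h0
    exact h0

lemma aux_Q {P : Polynomial ℂ} {n : ℕ} (hn : 1 ≤ n) (hdeg : P.natDegree = n) :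
    Polynomial.derivative (Polynomial.reverse (P.map (starRingEnd ℂ)))
      = Polynomial.reflect (n - 1)
          ((C (n : ℂ) * P - X * Polynomial.derivative P).map (starRingEnd ℂ)) := by
  have hdm : (P.map (starRingEnd ℂ)).natDegree = n := by
    rw [Polynomial.natDegree_map_eq_of_injective (RingHom.injective _), hdeg]
  ext i
  rw [Polynomial.coeff_derivative, Polynomial.reverse, hdm, Polynomial.coeff_reflect,
    Polynomial.coeff_reflect, Polynomial.coeff_map, Polynomial.coeff_map, aux_Dcoeff]
  rcases le_or_gt (i + 1) n with h | h
  · rw [Polynomial.revAt_le h, Polynomial.revAt_le (by omega : i ≤ n - 1)]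
    have he : n - 1 - i = n - (i + 1) := by omega
    rw [he]
    rw [map_mul]
    have hc : (starRingEnd ℂ) ((n : ℂ) - ((n - (i + 1) : ℕ) : ℂ)) = (i + 1 : ℂ) := by
      rw [map_sub]
      simp only [Complex.conj_natCast]
      have : ((n - (i + 1) : ℕ) : ℂ) = (n : ℂ) - ((i + 1 : ℕ) : ℂ) := by
        exact Nat.cast_sub h
      rw [this]
      push_cast
      ring
    rw [hc]
    push_cast
    ring
  · rw [Polynomial.revAt_eq_self_of_lt h, Polynomial.revAt_eq_self_of_lt (by omega : n - 1 < i)]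
    have hL : P.coeff (i + 1) = 0 :=
      Polynomial.coeff_eq_zero_of_natDegree_lt (by omega)
    rw [hL, map_zero, zero_mul]
    rcases eq_or_lt_of_le (by omega : n ≤ i) with he | hlt
    · rw [← he]
      simp
    · have : P.coeff i = 0 := Polynomial.coeff_eq_zero_of_natDegree_lt (by omega)
      rw [this]
      simp

set_option maxHeartbeats 2000000 in
/-- If `P(z) = aₙzⁿ + Σ_{ν=μ}^n a_{n-ν} z^{n-ν}`, `1 ≤ μ ≤ n`, has all its zeros in
`|z| < k ≤ 1`, `m = min_{|z|=k} |P(z)|` and `Q(z) = zⁿ · conj(P(1/conj z))`, then for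
all `z` with `|z| = 1`, `k^μ |P'(z)| - mn/k^{n-μ} ≥ |Q'(z)|`. -/
theorem reciprocal_derivative_refined_bound
    (n μ : ℕ) (P : Polynomial ℂ) (k : ℝ)
    (hμ1 : 1 ≤ μ) (hμn : μ ≤ n)
    (hdeg : P.natDegree = n)
    (hcoeff : ∀ j, 1 ≤ j → j < μ → P.coeff (n - j) = 0)
    (hk : k ≤ 1)
    (hzeros : ∀ z : ℂ, P.eval z = 0 → ‖z‖ < k)
    (m : ℝ)
    (hm : m = sInf ((fun z => ‖P.eval z‖) '' sphere (0 : ℂ) k))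
    (Q : Polynomial ℂ) (hQ : Q = Polynomial.reverse (P.map (starRingEnd ℂ))) :
    ∀ z : ℂ, ‖z‖ = 1 →
      k ^ μ * ‖(Polynomial.derivative P).eval z‖
          - m * (n : ℝ) / k ^ (n - μ)
        ≥ ‖(Polynomial.derivative Q).eval z‖ := by
  intro z₀ hz₀
  simp only [Complex.norm_eq_abs] at hzeros hm hz₀ ⊢
  have hn : 1 ≤ n := le_trans hμ1 hμn
  have hP0 : P ≠ 0 := by intro h; rw [h] at hdeg; simp at hdeg; omega
  -- k > 0
  have hk0 : 0 < k := by
    obtain ⟨x, hx⟩ := IsAlgClosed.exists_root P (by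
      rw [Polynomial.degree_eq_natDegree hP0, hdeg]
      simp only [ne_eq, Nat.cast_eq_zero]
      omega)
    have := hzeros x hx
    have h0 := Complex.abs.nonneg x
    linarith
  -- min modulus facts
  have hconts : Continuous fun z : ℂ => Complex.abs (P.eval z) :=
    Complex.continuous_abs.comp (Polynomial.continuous P)
  have hSne : ((fun z => Complex.abs (P.eval z)) '' sphere (0 : ℂ) k).Nonempty := by
    refine ⟨Complex.abs (P.eval (k : ℂ)), ⟨(k : ℂ), ?_, rfl⟩⟩
    simp [mem_sphere_iff_norm, Complex.norm_eq_abs, Complex.abs_ofReal, abs_of_pos hk0]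
  have hScomp : IsCompact ((fun z => Complex.abs (P.eval z)) '' sphere (0 : ℂ) k) :=
    (isCompact_sphere 0 k).image hconts
  have hmle : ∀ x : ℂ, Complex.abs x = k → m ≤ Complex.abs (P.eval x) := by
    intro x hx
    rw [hm]
    apply csInf_le hScomp.bddBelow
    exact ⟨x, by simp [mem_sphere_iff_norm, Complex.norm_eq_abs, hx], rfl⟩
  have hm0 : 0 < m := by
    have hmem := hScomp.sInf_mem hSne
    rw [← hm] at hmem
    obtain ⟨x, hx, hval⟩ := hmem
    have hxk : Complex.abs x = k := by
      simpa [mem_sphere_iff_norm, Complex.norm_eq_abs] using hx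
    have hPx : P.eval x ≠ 0 := by
      intro h
      have := hzeros x h
      rw [hxk] at this
      exact lt_irrefl _ this
    rw [← hval]
    exact Complex.abs.pos hPx
  obtain ⟨hgrow, hleadm⟩ := aux_growth hn hdeg hk0 hm0.le hzeros hmle
  have hkn0 : (k : ℝ) ^ n ≠ 0 := by positivity
  have hmC0 : ((m : ℂ)) ≠ 0 := by
    simp only [ne_eq, Complex.ofReal_eq_zero]; exact ne_of_gt hm0
  have hkC0 : ((k : ℂ)) ≠ 0 := by
    simp only [ne_eq, Complex.ofReal_eq_zero]; exact ne_of_gt hk0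
  have hnC0 : ((n : ℂ)) ≠ 0 := Nat.cast_ne_zero.mpr (by omega)
  have hz00 : z₀ ≠ 0 := by intro h; rw [h] at hz₀; simp at hz₀
  have hzpow0 : z₀ ^ (n - 1) ≠ 0 := pow_ne_zero _ hz00
  -- the perturbed polynomial
  set c : ℝ := m * n / k ^ n with hc
  have hc0 : 0 < c := by
    rw [hc]
    have : (0:ℝ) < (n:ℝ) := by exact_mod_cast Nat.pos_of_ne_zero (by omega)
    positivity
  have habslead : m / k ^ n ≤ Complex.abs (P.coeff n) := by
    rw [div_le_iff₀ (by positivity)]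
    calc m ≤ k ^ n * Complex.abs (P.coeff n) := hleadm
      _ = Complex.abs (P.coeff n) * k ^ n := by ring
  -- roots of perturbation
  have hBzero : ∀ β : ℂ, Complex.abs β < 1 →
      ∀ x : ℂ, (P - C ((m : ℂ) / (k : ℂ) ^ n * β) * X ^ n).eval x = 0 → Complex.abs x < k := by
    intro β hβ x hx
    by_contra hxk
    push_neg at hxk
    have hxx : P.eval x = (m : ℂ) / (k : ℂ) ^ n * β * x ^ n := by
      have := hx
      simp only [eval_sub, eval_mul, eval_C, eval_pow, eval_X, sub_eq_zero] at this
      exact this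
    have habs : Complex.abs (P.eval x) = m / k ^ n * Complex.abs β * Complex.abs x ^ n := by
      rw [hxx]
      simp only [map_mul, map_pow, map_div₀, Complex.abs_ofReal]
      rw [abs_of_pos hm0, abs_of_pos hk0]
    have hgx := hgrow x hxk
    rw [habs] at hgx
    have hxpos : 0 < Complex.abs x := lt_of_lt_of_le hk0 hxk
    have hxpow : 0 < Complex.abs x ^ n := pow_pos hxpos n
    have hred : k ^ n * (m / k ^ n * Complex.abs β * Complex.abs x ^ n)
        = m * Complex.abs β * Complex.abs x ^ n := by
      field_simp
    rw [hred] at hgx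
    nlinarith [mul_pos hm0 hxpow]
  -- degree of perturbation
  have hdegR : ∀ β : ℂ, Complex.abs β < 1 →
      (P - C ((m : ℂ) / (k : ℂ) ^ n * β) * X ^ n).natDegree = n := by
    intro β hβ
    have hcoef : (P - C ((m : ℂ) / (k : ℂ) ^ n * β) * X ^ n).coeff n
        = P.coeff n - (m : ℂ) / (k : ℂ) ^ n * β := by
      simp only [Polynomial.coeff_sub, Polynomial.coeff_C_mul, Polynomial.coeff_X_pow,
        if_pos, mul_one]
    have hne : (P - C ((m : ℂ) / (k : ℂ) ^ n * β) * X ^ n).coeff n ≠ 0 := by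
      rw [hcoef, sub_ne_zero]
      intro h
      have : Complex.abs (P.coeff n) = m / k ^ n * Complex.abs β := by
        rw [h]
        simp only [map_mul, map_div₀, map_pow, Complex.abs_ofReal]
        rw [abs_of_pos hm0, abs_of_pos hk0]
      have h2 : m / k ^ n * Complex.abs β < m / k ^ n := by
        have := div_pos hm0 (by positivity : (0:ℝ) < k ^ n)
        nlinarith [Complex.abs.nonneg β]
      rw [this] at habslead
      linarith
    apply le_antisymm
    · apply Polynomial.natDegree_le_iff_coeff_eq_zero.mpr
      intro N hN
      simp only [Polynomial.coeff_sub, Polynomial.coeff_C_mul, Polynomial.coeff_X_pow]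
      rw [Polynomial.coeff_eq_zero_of_natDegree_lt (by omega : P.natDegree < N)]
      rw [if_neg (by omega)]
      ring
    · exact Polynomial.le_natDegree_of_ne_zero hne
  -- the D polynomial is unchanged
  have hDsame : ∀ d : ℂ,
      C (n : ℂ) * (P - C d * X ^ n) - X * Polynomial.derivative (P - C d * X ^ n)
        = C (n : ℂ) * P - X * Polynomial.derivative P := by
    intro d
    ext i
    rw [aux_Dcoeff, aux_Dcoeff, Polynomial.coeff_sub]
    rcases eq_or_ne i n with rfl | hne
    · rw [sub_self, zero_mul, zero_mul]
    · simp only [Polynomial.coeff_C_mul, Polynomial.coeff_X_pow]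
      rw [if_neg hne]
      ring
  -- coefficient vanishing for D
  have hDzero : ∀ i, n - μ < i →
      (C (n : ℂ) * P - X * Polynomial.derivative P).coeff i = 0 := by
    intro i hi
    rw [aux_Dcoeff]
    rcases lt_trichotomy i n with h | rfl | h
    · have h1 : 1 ≤ n - i := by omega
      have h2 : n - i < μ := by omega
      have h3 : n - (n - i) = i := by omega
      rw [← h3, hcoeff (n - i) h1 h2, mul_zero]
    · rw [sub_self, zero_mul]
    · rw [Polynomial.coeff_eq_zero_of_natDegree_lt (by omega), mul_zero]
  set Dp := C (n : ℂ) * P - X * Polynomial.derivative P with hDp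
  -- |P'(z₀)| ≥ c
  have hP'ge : c ≤ Complex.abs ((Polynomial.derivative P).eval z₀) := by
    by_contra hlt
    push_neg at hlt
    set β : ℂ := ((k : ℂ) ^ n / ((m : ℂ) * (n : ℂ))) * (Polynomial.derivative P).eval z₀
        * (z₀ ^ (n - 1))⁻¹ with hβ
    have habsβ : Complex.abs β < 1 := by
      rw [hβ]
      simp only [map_mul, map_div₀, map_pow, map_inv₀, Complex.abs_ofReal, Complex.abs_natCast,
        hz₀, one_pow, inv_one, mul_one]
      rw [abs_of_pos hk0, abs_of_pos hm0]
      rw [div_mul_eq_mul_div, div_lt_one (by positivity)]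
      rw [hc, lt_div_iff₀ (by positivity : (0:ℝ) < k ^ n)] at hlt
      nlinarith
    have hR := aux_GL hn (hdegR β habsβ) (hBzero β habsβ)
        (z := z₀) (by rw [hz₀]; exact hk)
    apply hR.2
    rw [derivative_sub, derivative_mul, derivative_C, zero_mul, zero_add,
      Polynomial.derivative_X_pow]
    simp only [eval_sub, eval_mul, eval_C, eval_pow, eval_X]
    have hkey : (m : ℂ) / (k : ℂ) ^ n * β * ((n : ℂ) * z₀ ^ (n - 1))
        = (Polynomial.derivative P).eval z₀ := by
      rw [hβ]
      field_simp
    rw [hkey, sub_self]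
  -- key bound for each t < 1
  have hstep : ∀ t : ℝ, 0 ≤ t → t < 1 →
      Complex.abs (Dp.eval z₀)
        ≤ k ^ μ * (Complex.abs ((Polynomial.derivative P).eval z₀) - t * c) := by
    intro t ht0 ht1
    have hP'0 : (Polynomial.derivative P).eval z₀ ≠ 0 := by
      intro h
      rw [h] at hP'ge
      simp at hP'ge
      linarith
    set aP : ℝ := Complex.abs ((Polynomial.derivative P).eval z₀) with haP
    have haP0 : 0 < aP := Complex.abs.pos hP'0
    set u : ℂ := (Polynomial.derivative P).eval z₀ / (aP : ℂ) with hu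
    have habsu : Complex.abs u = 1 := by
      rw [hu, map_div₀, Complex.abs_ofReal, abs_of_pos haP0, ← haP, div_self (ne_of_gt haP0)]
    set β : ℂ := (t : ℂ) * u * (z₀ ^ (n - 1))⁻¹ with hβ
    have habsβ : Complex.abs β < 1 := by
      rw [hβ]
      simp only [map_mul, map_inv₀, map_pow, Complex.abs_ofReal, hz₀, one_pow, inv_one, habsu]
      rw [abs_of_nonneg ht0, mul_one, mul_one]
      exact ht1
    set R : Polynomial ℂ := P - C ((m : ℂ) / (k : ℂ) ^ n * β) * X ^ n with hR
    have hL := aux_L hμ1 hμn hk0 hk R (hdegR β habsβ) hn (hBzero β habsβ)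
      (by rw [hR, hDsame]; exact hDzero) z₀ hz₀
    rw [hR, hDsame] at hL
    have hR'eval : (Polynomial.derivative R).eval z₀ = u * ((aP : ℂ) - (t : ℂ) * c) := by
      rw [hR, derivative_sub, derivative_mul, derivative_C, zero_mul, zero_add,
        Polynomial.derivative_X_pow]
      simp only [eval_sub, eval_mul, eval_C, eval_pow, eval_X]
      have haPC : ((aP : ℝ) : ℂ) ≠ 0 := by exact_mod_cast ne_of_gt haP0
      have hP'u : (Polynomial.derivative P).eval z₀ = u * (aP : ℂ) := by
        rw [hu, div_mul_cancel₀ _ haPC]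
      have hkey : (m : ℂ) / (k : ℂ) ^ n * β * ((n : ℂ) * z₀ ^ (n - 1))
          = (t : ℂ) * u * ((c : ℝ) : ℂ) := by
        rw [hβ, hc]
        push_cast
        field_simp
      rw [hP'u, hkey]
      ring
    rw [hR'eval] at hL
    have habsR' : Complex.abs (u * ((aP : ℂ) - (t : ℂ) * c)) = aP - t * c := by
      rw [map_mul, habsu, one_mul]
      have : ((aP : ℂ) - (t : ℂ) * c) = ((aP - t * c : ℝ) : ℂ) := by push_cast; ring
      rw [this, Complex.abs_ofReal, abs_of_nonneg]
      nlinarith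
    rw [habsR'] at hL
    exact hL
  -- pass to the limit t → 1
  have hlim : Complex.abs (Dp.eval z₀)
      ≤ k ^ μ * (Complex.abs ((Polynomial.derivative P).eval z₀) - c) := by
    apply le_of_forall_pos_le_add
    intro ε hε
    have hkμ : (0:ℝ) < k ^ μ := by positivity
    set δ : ℝ := min 1 (ε / (k ^ μ * c)) with hδ
    have hδ0 : 0 < δ := by
      apply lt_min one_pos
      positivity
    have hδ1 : δ ≤ 1 := min_le_left _ _
    have ht0 : 0 ≤ 1 - δ / 2 := by linarith
    have ht1 : 1 - δ / 2 < 1 := by linarith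
    have := hstep (1 - δ / 2) ht0 ht1
    have hδε : k ^ μ * c * (δ / 2) ≤ ε := by
      have h1 : δ ≤ ε / (k ^ μ * c) := min_le_right _ _
      rw [le_div_iff₀ (by positivity)] at h1
      nlinarith
    nlinarith
  -- identify |Q'(z₀)| with |Dp(z₀)|
  have hconjz : (starRingEnd ℂ) z₀ = z₀⁻¹ := by
    have h1 : z₀ * (starRingEnd ℂ) z₀ = 1 := by
      rw [Complex.mul_conj]
      rw [← Complex.sq_abs, hz₀]
      norm_num
    field_simp at h1 ⊢
    linear_combination h1
  have hDpdeg : Dp.natDegree ≤ n - 1 := by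
    apply Polynomial.natDegree_le_iff_coeff_eq_zero.mpr
    intro N hN
    exact hDzero N (by omega)
  have hQD : Complex.abs ((Polynomial.derivative Q).eval z₀) = Complex.abs (Dp.eval z₀) := by
    rw [hQ, aux_Q hn hdeg]
    have hmapdeg : (Dp.map (starRingEnd ℂ)).natDegree ≤ n - 1 :=
      le_trans Polynomial.natDegree_map_le hDpdeg
    rw [aux_eval_reflect _ _ hmapdeg z₀ hz00]
    rw [map_mul, map_pow, hz₀, one_pow, one_mul]
    rw [← hconjz, Polynomial.eval_map, Polynomial.eval₂_at_apply]
    rw [← Complex.abs_conj ((starRingEnd ℂ) (Dp.eval z₀))]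
    rw [Complex.conj_conj]
  -- conclude
  rw [ge_iff_le, hQD]
  have hkeq : k ^ μ * c = m * n / k ^ (n - μ) := by
    rw [hc]
    have hsplit : k ^ n = k ^ (n - μ) * k ^ μ := by
      rw [← pow_add]
      congr 1
      omega
    rw [hsplit]
    field_simp
  calc Complex.abs (Dp.eval z₀)
      ≤ k ^ μ * (Complex.abs ((Polynomial.derivative P).eval z₀) - c) := hlim
    _ = k ^ μ * Complex.abs ((Polynomial.derivative P).eval z₀) - m * n / k ^ (n - μ) := by
        rw [mul_sub, hkeq]
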